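/- arXiv:math-ph/0005011 — 3 statements merged into one kernel-verified Lean document; each statement's English description precedes it below -/
import Mathlib

section
/- Let H₁ and H₂ be finite-dimensional complex Hilbert spaces, let ψ ∈ H₁ ⊗ H₂ be a unit vector with Schmidt decomposition ψ = Σᵢ √pᵢ · φᵢ ⊗ χᵢ (with {φᵢ}, {χᵢ} orthonormal bases and pᵢ ≥ 0, Σᵢ pᵢ = 1), and let P_ψ be the orthogonal projection onto the span of ψ. Then ‖P_ψ‖_γ = Σ_{i,j} √(pᵢ pⱼ) = (Σᵢ √pᵢ)². -/
open Matrix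
open scoped Kronecker ComplexOrder

noncomputable def traceNorm {n : Type*} [Fintype n] [DecidableEq n] (A : Matrix n n ℂ) : ℝ :=
  ((Matrix.posSemidef_conjTranspose_mul_self A).1.eigenvectorUnitary.1 *
    diagonal (((↑) : ℝ → ℂ) ∘ (√·) ∘ (Matrix.posSemidef_conjTranspose_mul_self A).1.eigenvalues) *
    (star (Matrix.posSemidef_conjTranspose_mul_self A).1.eigenvectorUnitary : Matrix n n ℂ)).trace.re

noncomputable def gammaNorm {m n : Type*} [Fintype m] [DecidableEq m] [Fintype n] [DecidableEq n]
    (t : Matrix (m × n) (m × n) ℂ) : ℝ :=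
  sInf { c : ℝ | ∃ (r : ℕ) (u : Fin r → Matrix m m ℂ) (v : Fin r → Matrix n n ℂ),
    t = ∑ i, (u i) ⊗ₖ (v i) ∧ c = ∑ i, traceNorm (u i) * traceNorm (v i) }

def IsDensity {n : Type*} [Fintype n] (ρ : Matrix n n ℂ) : Prop :=
  ρ.PosSemidef ∧ ρ.trace = 1

def evec {ι : Type*} (ψ : EuclideanSpace ℂ ι) : ι → ℂ := ψ

noncomputable def tensorVec {ι κ : Type*} (a : EuclideanSpace ℂ ι) (b : EuclideanSpace ℂ κ) :
    EuclideanSpace ℂ (ι × κ) :=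
  (WithLp.equiv 2 _).symm (fun p => evec a p.1 * evec b p.2)

noncomputable def projOnto {ι : Type*} (ψ : EuclideanSpace ℂ ι) : Matrix ι ι ℂ :=
  Matrix.vecMulVec (evec ψ) (star (evec ψ))

/-! ### Auxiliary lemmas about the trace norm -/

section TraceNormLemmas

lemma retrace_eq_sum_eigenvalues {n : Type*} [Fintype n] [DecidableEq n]
    {S : Matrix n n ℂ} (hS : S.IsHermitian) : S.trace.re = ∑ i, hS.eigenvalues i := by
  conv_lhs => rw [hS.spectral_theorem]
  rw [Unitary.conjStarAlgAut_apply, trace_mul_cycle,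
    Matrix.mem_unitaryGroup_iff'.mp hS.eigenvectorUnitary.2, Matrix.one_mul, trace_diagonal]
  simp

lemma retrace_sq_hermitian {n : Type*} [Fintype n] [DecidableEq n]
    {S : Matrix n n ℂ} (hS : S.IsHermitian) :
    (S * S).trace.re = ∑ i, hS.eigenvalues i ^ 2 := by
  have h := hS.spectral_theorem
  set U : Matrix n n ℂ := ↑hS.eigenvectorUnitary with hUdef
  set D : Matrix n n ℂ := diagonal (RCLike.ofReal ∘ hS.eigenvalues) with hDdef
  have hU : star U * U = 1 := Matrix.mem_unitaryGroup_iff'.mp hS.eigenvectorUnitary.2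
  have e1 : S * S = U * (D * (D * star U)) := by
    rw [h, Unitary.conjStarAlgAut_apply]; simp only [Matrix.mul_assoc]
    rw [← Matrix.mul_assoc (star U) U, hU, Matrix.one_mul]
  rw [e1, trace_mul_comm]
  simp only [Matrix.mul_assoc]
  rw [hU, Matrix.mul_one, hDdef, diagonal_mul_diagonal, trace_diagonal]
  simp [sq]

lemma traceNorm_eq_sum_sqrt {n : Type*} [Fintype n] [DecidableEq n] (A : Matrix n n ℂ) :
    traceNorm A =
      ∑ i, Real.sqrt ((Matrix.posSemidef_conjTranspose_mul_self A).1.eigenvalues i) := by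
  unfold traceNorm
  rw [trace_mul_cycle, Matrix.mem_unitaryGroup_iff'.mp
    (Matrix.posSemidef_conjTranspose_mul_self A).1.eigenvectorUnitary.2, Matrix.one_mul,
    trace_diagonal]
  simp

lemma traceNorm_nonneg' {n : Type*} [Fintype n] [DecidableEq n] (A : Matrix n n ℂ) :
    0 ≤ traceNorm A := by
  rw [traceNorm_eq_sum_sqrt]
  exact Finset.sum_nonneg fun i _ => Real.sqrt_nonneg _

lemma frobenius_sq_le_traceNorm_sq {n : Type*} [Fintype n] [DecidableEq n] (A : Matrix n n ℂ) :
    ∑ i, ∑ j, ‖A i j‖ ^ 2 ≤ traceNorm A ^ 2 := by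
  set hP := Matrix.posSemidef_conjTranspose_mul_self A with hPdef
  have h1 : ∑ i, ∑ j, ‖A i j‖ ^ 2 = (Aᴴ * A).trace.re := by
    rw [Matrix.trace]
    rw [Complex.re_sum]
    rw [Finset.sum_comm]
    refine Finset.sum_congr rfl fun j _ => ?_
    rw [Matrix.diag, Matrix.mul_apply, Complex.re_sum]
    refine Finset.sum_congr rfl fun i _ => ?_
    rw [Matrix.conjTranspose_apply]
    rw [Complex.star_def, ← Complex.normSq_eq_conj_mul_self]
    rw [Complex.ofReal_re, Complex.normSq_eq_norm_sq]
  rw [h1, retrace_eq_sum_eigenvalues hP.1, traceNorm_eq_sum_sqrt]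
  have hnn : ∀ i, 0 ≤ Real.sqrt (hP.1.eigenvalues i) := fun i => Real.sqrt_nonneg _
  calc ∑ i, hP.1.eigenvalues i = ∑ i, Real.sqrt (hP.1.eigenvalues i) ^ 2 :=
        Finset.sum_congr rfl fun i _ => (Real.sq_sqrt (hP.eigenvalues_nonneg i)).symm
    _ ≤ ∑ i, Real.sqrt (hP.1.eigenvalues i) * ∑ j, Real.sqrt (hP.1.eigenvalues j) := by
        refine Finset.sum_le_sum fun i _ => ?_
        rw [sq]
        exact mul_le_mul_of_nonneg_left
          (Finset.single_le_sum (fun j _ => hnn j) (Finset.mem_univ i)) (hnn i)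
    _ = (∑ i, Real.sqrt (hP.1.eigenvalues i)) ^ 2 := by rw [← Finset.sum_mul, sq]

lemma traceNorm_eq_of_sqrt {n : Type*} [Fintype n] [DecidableEq n] {A B : Matrix n n ℂ}
    (hB : B.PosSemidef) (h : B ^ 2 = Aᴴ * A) : traceNorm A = B.trace.re := by
  have hP := Matrix.posSemidef_conjTranspose_mul_self A
  have e1 : traceNorm A = (cfc Real.sqrt (Aᴴ * A)).trace.re := by
    rw [hP.1.cfc_eq, IsHermitian.cfc, Unitary.conjStarAlgAut_apply]; rfl
  have e2 : cfc Real.sqrt (Aᴴ * A) = B := by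
    open scoped MatrixOrder in
    rw [← cfcₙ_eq_cfc (hf0 := by simp), ← CFC.sqrt_eq_real_sqrt (Aᴴ * A) hP.nonneg,
      CFC.sqrt_eq_iff _ _ hP.nonneg hB.nonneg, ← sq, h]
  rw [e1, e2]

lemma norm_sq_sum_eq {N : Type*} [Fintype N] (y : N → ℂ) :
    (∑ k, star (y k) * y k : ℂ) = ((∑ k, ‖y k‖ ^ 2 : ℝ) : ℂ) := by
  push_cast
  refine Finset.sum_congr rfl fun k _ => ?_
  rw [Complex.star_def, ← Complex.normSq_eq_conj_mul_self, Complex.normSq_eq_norm_sq]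
  push_cast
  ring

lemma traceNorm_rankOne {N : Type*} [Fintype N] [DecidableEq N] (x y : N → ℂ) :
    traceNorm (vecMulVec x (star y)) =
      Real.sqrt (∑ i, ‖x i‖ ^ 2) * Real.sqrt (∑ i, ‖y i‖ ^ 2) := by
  set sx : ℝ := ∑ i, ‖x i‖ ^ 2 with hsx
  set sy : ℝ := ∑ i, ‖y i‖ ^ 2 with hsy
  have hsx0 : 0 ≤ sx := Finset.sum_nonneg fun i _ => sq_nonneg _
  have hsy0 : 0 ≤ sy := Finset.sum_nonneg fun i _ => sq_nonneg _
  rcases eq_or_lt_of_le hsy0 with hsy1 | hsy1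
  · -- y = 0 case
    have hy0 : y = 0 := by
      funext i
      have h0 : ‖y i‖ ^ 2 = 0 :=
        (Finset.sum_eq_zero_iff_of_nonneg (fun j _ => sq_nonneg ‖y j‖)).mp hsy1.symm i
          (Finset.mem_univ i)
      simpa using h0
    have hA0 : vecMulVec x (star y) = 0 := by
      ext i j; simp [vecMulVec_apply, hy0]
    have h := traceNorm_eq_of_sqrt (A := vecMulVec x (star y)) Matrix.PosSemidef.zero
      (by rw [hA0]; simp)
    rw [h, ← hsy1]
    simp
  · set c : ℝ := Real.sqrt sx / Real.sqrt sy with hc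
    have hc0 : 0 ≤ c := div_nonneg (Real.sqrt_nonneg _) (Real.sqrt_nonneg _)
    have hsyne : Real.sqrt sy ≠ 0 := by positivity
    set M : Matrix N N ℂ := vecMulVec y (star y) with hM
    have hMv : ∀ z : N → ℂ, M *ᵥ z = (star y ⬝ᵥ z) • y := by
      intro z
      funext i
      simp only [hM, mulVec, dotProduct, vecMulVec_apply, Pi.star_apply, Pi.smul_apply,
        smul_eq_mul, Finset.sum_mul]
      refine Finset.sum_congr rfl fun j _ => by ring
    have hstar : ∀ z : N → ℂ, star z ⬝ᵥ y = star (star y ⬝ᵥ z) := by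
      intro z
      simp only [dotProduct, star_sum, star_mul', star_star, Pi.star_apply]
      refine Finset.sum_congr rfl fun j _ => by ring
    have hB : ((c : ℂ) • M).PosSemidef := by
      refine Matrix.PosSemidef.of_dotProduct_mulVec_nonneg ?_ ?_
      · ext i j
        simp only [hM, conjTranspose_apply, Matrix.smul_apply, vecMulVec_apply, Pi.star_apply,
          smul_eq_mul, star_mul', star_star]
        rw [Complex.star_def, Complex.conj_ofReal]
        ring
      · intro z
        rw [smul_mulVec, dotProduct_smul, hMv z, dotProduct_smul, hstar z,
          smul_eq_mul, smul_eq_mul]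
        have h2 : (0:ℂ) ≤ star y ⬝ᵥ z * star (star y ⬝ᵥ z) := by
          rw [Complex.star_def, Complex.mul_conj, Complex.le_def]
          simp [Complex.normSq_nonneg]
        have h1 : (0:ℂ) ≤ (c:ℂ) := by rw [Complex.le_def]; simp [hc0]
        have := mul_nonneg h1 h2
        convert this using 1
    have hsq : ((c : ℂ) • M) ^ 2 = (vecMulVec x (star y))ᴴ * vecMulVec x (star y) := by
      rw [sq]
      ext i j
      simp only [hM, Matrix.mul_apply, Matrix.smul_apply, vecMulVec_apply, Pi.star_apply,
        conjTranspose_apply, smul_eq_mul, star_mul', star_star]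
      have lhs : ∑ k, (c:ℂ) * (y i * star (y k)) * ((c:ℂ) * (y k * star (y j)))
          = (c:ℂ)^2 * (∑ k, star (y k) * y k) * (y i * star (y j)) := by
        simp only [Finset.mul_sum, Finset.sum_mul]
        exact Finset.sum_congr rfl fun k _ => by ring
      have rhs : ∑ k, (star (x k) * y i) * (x k * star (y j))
          = (∑ k, star (x k) * x k) * (y i * star (y j)) := by
        simp only [Finset.mul_sum, Finset.sum_mul]
        exact Finset.sum_congr rfl fun k _ => by ring
      rw [lhs, rhs, norm_sq_sum_eq y, norm_sq_sum_eq x, ← hsx, ← hsy]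
      have : (c:ℂ)^2 * (sy:ℂ) = (sx:ℂ) := by
        have hr : c^2 * sy = sx := by
          rw [hc, div_pow, Real.sq_sqrt hsx0, Real.sq_sqrt hsy0,
            div_mul_cancel₀ _ (ne_of_gt hsy1)]
        push_cast [← hr]
        ring
      rw [this]
    rw [traceNorm_eq_of_sqrt hB hsq]
    have htr : ((c : ℂ) • M).trace = ((c * sy : ℝ) : ℂ) := by
      rw [Matrix.trace]
      simp only [hM, diag_apply, Matrix.smul_apply, vecMulVec_apply, Pi.star_apply, smul_eq_mul]
      rw [← Finset.mul_sum]
      have : (∑ i, y i * star (y i) : ℂ) = ((sy : ℝ) : ℂ) := by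
        rw [← norm_sq_sum_eq y]
        exact Finset.sum_congr rfl fun k _ => by ring
      rw [this]
      push_cast
      ring
    rw [htr, Complex.ofReal_re, hc, div_mul_eq_mul_div, mul_div_assoc, Real.div_sqrt]

end TraceNormLemmas

/-! ### Auxiliary lemmas about sums, dot products and Kronecker products -/

section SumLemmas

variable {α β M N : Type*} [Fintype α] [Fintype M] [Fintype N]

lemma dotProduct_sum'' (x : α → ℂ) (s : Finset β) (f : β → α → ℂ) :
    x ⬝ᵥ (∑ k ∈ s, f k) = ∑ k ∈ s, x ⬝ᵥ (f k) := by
  simp only [dotProduct, Finset.sum_apply, Finset.mul_sum]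
  exact Finset.sum_comm

lemma sum_dotProduct'' (x : α → ℂ) (s : Finset β) (f : β → α → ℂ) :
    (∑ k ∈ s, f k) ⬝ᵥ x = ∑ k ∈ s, (f k) ⬝ᵥ x := by
  simp only [dotProduct, Finset.sum_apply, Finset.sum_mul]
  exact Finset.sum_comm

omit [Fintype α] in
lemma sum_mulVec'' {α' : Type*} [Fintype α'] (s : Finset β) (f : β → Matrix α α' ℂ)
    (x : α' → ℂ) : (∑ k ∈ s, f k) *ᵥ x = ∑ k ∈ s, (f k) *ᵥ x := by
  funext j
  simp only [mulVec, dotProduct, Matrix.sum_apply, Finset.sum_apply, Finset.sum_mul]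
  exact Finset.sum_comm

omit [Fintype α] in
lemma mulVec_sum'' {α' : Type*} [Fintype α'] (s : Finset β) (Mt : Matrix α α' ℂ)
    (f : β → α' → ℂ) : Mt *ᵥ (∑ k ∈ s, f k) = ∑ k ∈ s, Mt *ᵥ f k := by
  funext j
  simp only [mulVec, dotProduct, Finset.sum_apply, Finset.mul_sum]
  exact Finset.sum_comm

lemma vecMulVec_mulVec'' (x y z : α → ℂ) : vecMulVec x y *ᵥ z = (y ⬝ᵥ z) • x := by
  funext i
  simp only [mulVec, dotProduct, vecMulVec_apply, Pi.smul_apply, smul_eq_mul, Finset.sum_mul]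
  exact Finset.sum_congr rfl fun j _ => by ring

lemma star_dotProduct_comm (x y : α → ℂ) : star x ⬝ᵥ y = star (star y ⬝ᵥ x) := by
  simp only [dotProduct, star_sum, star_mul', star_star, Pi.star_apply]
  exact Finset.sum_congr rfl fun j _ => by ring

lemma tensor_dot (a a' : M → ℂ) (b b' : N → ℂ) :
    star (fun q : M × N => a q.1 * b q.2) ⬝ᵥ (fun q : M × N => a' q.1 * b' q.2)
      = (star a ⬝ᵥ a') * (star b ⬝ᵥ b') := by
  simp only [dotProduct, Pi.star_apply, star_mul']
  rw [Fintype.sum_prod_type]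
  calc ∑ q1, ∑ q2, star (a q1) * star (b q2) * (a' q1 * b' q2)
      = ∑ q1, ∑ q2, (star (a q1) * a' q1) * (star (b q2) * b' q2) :=
        Finset.sum_congr rfl fun q1 _ => Finset.sum_congr rfl fun q2 _ => by ring
    _ = _ := (Finset.sum_mul_sum _ _ _ _).symm

lemma kron_mulVec (u : Matrix M M ℂ) (v : Matrix N N ℂ) (a : M → ℂ) (b : N → ℂ) :
    (u ⊗ₖ v) *ᵥ (fun r : M × N => a r.1 * b r.2) =
      fun q : M × N => (u *ᵥ a) q.1 * (v *ᵥ b) q.2 := by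
  funext q
  simp only [mulVec, dotProduct, kroneckerMap_apply]
  rw [Fintype.sum_prod_type]
  calc ∑ r1, ∑ r2, u q.1 r1 * v q.2 r2 * (a r1 * b r2)
      = ∑ r1, ∑ r2, (u q.1 r1 * a r1) * (v q.2 r2 * b r2) :=
        Finset.sum_congr rfl fun r1 _ => Finset.sum_congr rfl fun r2 _ => by ring
    _ = (∑ r1, u q.1 r1 * a r1) * ∑ r2, v q.2 r2 * b r2 :=
        (Finset.sum_mul_sum _ _ _ _).symm

lemma kron_dot (u : Matrix M M ℂ) (v : Matrix N N ℂ) (a a' : M → ℂ) (b b' : N → ℂ) :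
    star (fun q : M × N => a q.1 * b q.2) ⬝ᵥ ((u ⊗ₖ v) *ᵥ fun r : M × N => a' r.1 * b' r.2)
      = (star a ⬝ᵥ (u *ᵥ a')) * (star b ⬝ᵥ (v *ᵥ b')) := by
  rw [kron_mulVec]
  exact tensor_dot a (u *ᵥ a') b (v *ᵥ b')

lemma norm_sum_mul_le (f g : α → ℂ) :
    ‖∑ i, f i * g i‖ ≤ Real.sqrt (∑ i, ‖f i‖ ^ 2) * Real.sqrt (∑ i, ‖g i‖ ^ 2) := by
  have h1 : ‖∑ i, f i * g i‖ ≤ ∑ i, ‖f i‖ * ‖g i‖ :=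
    (norm_sum_le _ _).trans (le_of_eq (Finset.sum_congr rfl fun i _ => norm_mul _ _))
  refine h1.trans ?_
  have ha : 0 ≤ ∑ i, ‖f i‖ * ‖g i‖ :=
    Finset.sum_nonneg fun i _ => mul_nonneg (norm_nonneg _) (norm_nonneg _)
  have h2 := Finset.sum_mul_sq_le_sq_mul_sq Finset.univ (fun i => ‖f i‖) (fun i => ‖g i‖)
  calc ∑ i, ‖f i‖ * ‖g i‖ = Real.sqrt ((∑ i, ‖f i‖ * ‖g i‖) ^ 2) := (Real.sqrt_sq ha).symm
    _ ≤ Real.sqrt ((∑ i, ‖f i‖ ^ 2) * ∑ i, ‖g i‖ ^ 2) := Real.sqrt_le_sqrt h2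
    _ = _ := Real.sqrt_mul (Finset.sum_nonneg fun i _ => sq_nonneg _) _

lemma orthonormal_sum_eq {ι : Type*} [DecidableEq ι] (φ : ι → EuclideanSpace ℂ N)
    (hφ : Orthonormal ℂ φ) (k l : ι) :
    ∑ i, star (evec (φ k) i) * evec (φ l) i = if k = l then (1:ℂ) else 0 := by
  have h := orthonormal_iff_ite.mp hφ k l
  rw [PiLp.inner_apply] at h
  simpa [RCLike.inner_apply, evec, Complex.star_def, mul_comm] using h

lemma orthonormal_norm_sum {ι : Type*} (φ : ι → EuclideanSpace ℂ N) (hφ : Orthonormal ℂ φ)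
    (k : ι) : ∑ i, ‖evec (φ k) i‖ ^ 2 = 1 := by
  have hnn : (0:ℝ) ≤ ∑ i, ‖evec (φ k) i‖ ^ 2 := Finset.sum_nonneg fun i _ => sq_nonneg _
  calc ∑ i, ‖evec (φ k) i‖ ^ 2 = Real.sqrt (∑ i, ‖evec (φ k) i‖ ^ 2) ^ 2 :=
        (Real.sq_sqrt hnn).symm
    _ = ‖φ k‖ ^ 2 := by rw [EuclideanSpace.norm_eq]; rfl
    _ = 1 := by rw [hφ.1 k]; norm_num

lemma compression_le {ι : Type*} [Fintype ι] [DecidableEq N]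
    (φ : ι → EuclideanSpace ℂ N) (hφ : Orthonormal ℂ φ) (u : Matrix N N ℂ) :
    ∑ k, ∑ l, ‖star (evec (φ k)) ⬝ᵥ (u *ᵥ evec (φ l))‖ ^ 2 ≤ ∑ i, ∑ j, ‖u i j‖ ^ 2 := by
  classical
  have stepA : ∀ l : ι, ∑ k, ‖star (evec (φ k)) ⬝ᵥ (u *ᵥ evec (φ l))‖ ^ 2
      ≤ ∑ i, ‖(u *ᵥ evec (φ l)) i‖ ^ 2 := by
    intro l
    set z : EuclideanSpace ℂ N := (WithLp.equiv 2 _).symm (u *ᵥ evec (φ l)) with hz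
    have h1 : ∀ k, star (evec (φ k)) ⬝ᵥ (u *ᵥ evec (φ l)) = inner (𝕜 := ℂ) (φ k) z := by
      intro k
      rw [EuclideanSpace.inner_eq_star_dotProduct, dotProduct_comm]
      rfl
    have hbess := hφ.sum_inner_products_le (s := Finset.univ) z
    have h2 : ‖z‖ ^ 2 = ∑ i, ‖(u *ᵥ evec (φ l)) i‖ ^ 2 := by
      rw [EuclideanSpace.norm_eq, Real.sq_sqrt (Finset.sum_nonneg fun i _ => sq_nonneg _)]
      rfl
    calc ∑ k, ‖star (evec (φ k)) ⬝ᵥ (u *ᵥ evec (φ l))‖ ^ 2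
        = ∑ k, ‖inner (𝕜 := ℂ) (φ k) z‖ ^ 2 :=
          Finset.sum_congr rfl fun k _ => by rw [h1]
      _ ≤ ‖z‖ ^ 2 := hbess
      _ = ∑ i, ‖(u *ᵥ evec (φ l)) i‖ ^ 2 := h2
  have stepB : ∀ i : N, ∑ l, ‖(u *ᵥ evec (φ l)) i‖ ^ 2 ≤ ∑ j, ‖u i j‖ ^ 2 := by
    intro i
    set c : EuclideanSpace ℂ N := (WithLp.equiv 2 _).symm (fun j => star (u i j)) with hc
    have h1 : ∀ l, ‖(u *ᵥ evec (φ l)) i‖ = ‖inner (𝕜 := ℂ) (φ l) c‖ := by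
      intro l
      rw [← norm_inner_symm]
      have : inner (𝕜 := ℂ) c (φ l) = (u *ᵥ evec (φ l)) i := by
        rw [EuclideanSpace.inner_eq_star_dotProduct]
        simp only [mulVec, dotProduct]
        refine Finset.sum_congr rfl fun j _ => ?_
        simp [hc, evec, mul_comm]
      rw [this]
    have hbess := hφ.sum_inner_products_le (s := Finset.univ) c
    have h2 : ‖c‖ ^ 2 = ∑ j, ‖u i j‖ ^ 2 := by
      rw [EuclideanSpace.norm_eq, Real.sq_sqrt (Finset.sum_nonneg fun j _ => sq_nonneg _)]
      refine Finset.sum_congr rfl fun j _ => ?_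
      simp [hc]
    calc ∑ l, ‖(u *ᵥ evec (φ l)) i‖ ^ 2
        = ∑ l, ‖inner (𝕜 := ℂ) (φ l) c‖ ^ 2 := Finset.sum_congr rfl fun l _ => by rw [h1]
      _ ≤ ‖c‖ ^ 2 := hbess
      _ = ∑ j, ‖u i j‖ ^ 2 := h2
  calc ∑ k, ∑ l, ‖star (evec (φ k)) ⬝ᵥ (u *ᵥ evec (φ l))‖ ^ 2
      = ∑ l, ∑ k, ‖star (evec (φ k)) ⬝ᵥ (u *ᵥ evec (φ l))‖ ^ 2 := Finset.sum_comm
    _ ≤ ∑ l, ∑ i, ‖(u *ᵥ evec (φ l)) i‖ ^ 2 := Finset.sum_le_sum fun l _ => stepA l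
    _ = ∑ i, ∑ l, ‖(u *ᵥ evec (φ l)) i‖ ^ 2 := Finset.sum_comm
    _ ≤ ∑ i, ∑ j, ‖u i j‖ ^ 2 := Finset.sum_le_sum fun i _ => stepB i

end SumLemmas

/-- The greatest cross norm of the projection onto a unit vector with Schmidt
coefficients `p` equals `(∑ i, √(p i))² = ∑ i j, √(p i * p j)`. -/
theorem gammaNorm_projOnto_schmidt (m n : ℕ) {ι : Type*} [Fintype ι]
    (p : ι → ℝ) (φ : ι → EuclideanSpace ℂ (Fin m)) (χ : ι → EuclideanSpace ℂ (Fin n))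
    (hp : ∀ i, 0 ≤ p i) (hpsum : ∑ i, p i = 1)
    (hφ : Orthonormal ℂ φ) (hχ : Orthonormal ℂ χ)
    (ψ : EuclideanSpace ℂ (Fin m × Fin n)) (hψnorm : ‖ψ‖ = 1)
    (hψ : ψ = ∑ i, Real.sqrt (p i) • tensorVec (φ i) (χ i)) :
    gammaNorm (projOnto ψ) = ∑ i, ∑ j, Real.sqrt (p i * p j) ∧
    gammaNorm (projOnto ψ) = (∑ i, Real.sqrt (p i)) ^ 2 := by
  classical
  have hψapp : ∀ q : Fin m × Fin n, evec ψ q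
      = ∑ k, ((Real.sqrt (p k) : ℝ) : ℂ) * (evec (φ k) q.1 * evec (χ k) q.2) := by
    intro q
    rw [hψ]
    show (∑ i, Real.sqrt (p i) • tensorVec (φ i) (χ i) : EuclideanSpace ℂ (Fin m × Fin n)) q = _
    rw [WithLp.ofLp_sum, Finset.sum_apply]
    refine Finset.sum_congr rfl fun k _ => ?_
    rw [PiLp.smul_apply]
    show Real.sqrt (p k) • (evec (φ k) q.1 * evec (χ k) q.2) = _
    rw [Complex.real_smul]
  have hψfun : evec ψ = ∑ k, ((Real.sqrt (p k) : ℝ) : ℂ) •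
      (fun q : Fin m × Fin n => evec (φ k) q.1 * evec (χ k) q.2) := by
    funext q
    rw [hψapp q, Finset.sum_apply]
    rfl
  set T : ℝ := (∑ i, Real.sqrt (p i)) ^ 2 with hT
  have hT0 : 0 ≤ ∑ i, Real.sqrt (p i) := Finset.sum_nonneg fun i _ => Real.sqrt_nonneg _
  have hTsum : ∑ k, ∑ l, Real.sqrt (p k * p l) = T := by
    rw [hT, sq, Finset.sum_mul_sum]
    exact Finset.sum_congr rfl fun k _ => Finset.sum_congr rfl fun l _ =>
      Real.sqrt_mul (hp k) _
  set S : Set ℝ := { c : ℝ | ∃ (r : ℕ) (u : Fin r → Matrix (Fin m) (Fin m) ℂ)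
      (v : Fin r → Matrix (Fin n) (Fin n) ℂ),
    projOnto ψ = ∑ i, (u i) ⊗ₖ (v i) ∧ c = ∑ i, traceNorm (u i) * traceNorm (v i) } with hS
  have hg : gammaNorm (projOnto ψ) = sInf S := rfl
  -- membership
  have hmem : T ∈ S := by
    set U : ι × ι → Matrix (Fin m) (Fin m) ℂ := fun kl =>
      vecMulVec (fun i => ((Real.sqrt (p kl.1 * p kl.2) : ℝ) : ℂ) * evec (φ kl.1) i)
        (star (evec (φ kl.2))) with hU
    set V : ι × ι → Matrix (Fin n) (Fin n) ℂ := fun kl =>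
      vecMulVec (evec (χ kl.1)) (star (evec (χ kl.2))) with hV
    set e := Fintype.equivFin (ι × ι) with he
    refine ⟨Fintype.card (ι × ι), fun a => U (e.symm a), fun a => V (e.symm a), ?_, ?_⟩
    · rw [Equiv.sum_comp e.symm (fun kl => U kl ⊗ₖ V kl)]
      ext q r
      rw [Matrix.sum_apply]
      have hlhs : projOnto ψ q r = evec ψ q * star (evec ψ r) := rfl
      rw [hlhs, hψapp q, hψapp r, star_sum, Finset.sum_mul_sum, Fintype.sum_prod_type]
      refine Finset.sum_congr rfl fun k _ => Finset.sum_congr rfl fun l _ => ?_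
      have hrhs : (U (k, l) ⊗ₖ V (k, l)) q r
          = (((Real.sqrt (p k * p l) : ℝ) : ℂ) * evec (φ k) q.1 * star (evec (φ l) r.1))
            * (evec (χ k) q.2 * star (evec (χ l) r.2)) := by
        simp only [hU, hV, kroneckerMap_apply, vecMulVec_apply, Pi.star_apply]
      rw [hrhs]
      simp only [star_mul', Complex.star_def, Complex.conj_ofReal]
      rw [Real.sqrt_mul (hp k), Complex.ofReal_mul]
      ring
    · rw [Equiv.sum_comp e.symm (fun kl => traceNorm (U kl) * traceNorm (V kl))]
      have hval : ∀ kl : ι × ι, traceNorm (U kl) * traceNorm (V kl)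
          = Real.sqrt (p kl.1 * p kl.2) := by
        rintro ⟨k, l⟩
        have hUval : traceNorm (U (k, l)) = Real.sqrt (p k * p l) := by
          rw [hU]
          rw [traceNorm_rankOne]
          have h1 : ∑ i, ‖((Real.sqrt (p k * p l) : ℝ) : ℂ) * evec (φ k) i‖ ^ 2
              = p k * p l := by
            have : ∀ i, ‖((Real.sqrt (p k * p l) : ℝ) : ℂ) * evec (φ k) i‖ ^ 2
                = (p k * p l) * ‖evec (φ k) i‖ ^ 2 := by
              intro i
              rw [norm_mul, mul_pow, Complex.norm_real, Real.norm_eq_abs,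
                abs_of_nonneg (Real.sqrt_nonneg _), Real.sq_sqrt (mul_nonneg (hp k) (hp l))]
            rw [Finset.sum_congr rfl fun i _ => this i, ← Finset.mul_sum,
              orthonormal_norm_sum φ hφ k, mul_one]
          rw [h1, orthonormal_norm_sum φ hφ l, Real.sqrt_one, mul_one]
        have hVval : traceNorm (V (k, l)) = 1 := by
          rw [hV]
          rw [traceNorm_rankOne]
          rw [orthonormal_norm_sum χ hχ k, orthonormal_norm_sum χ hχ l]
          simp
        rw [hUval, hVval, mul_one]
      rw [Finset.sum_congr rfl fun kl _ => hval kl, ← hTsum, Fintype.sum_prod_type]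
  -- lower bound
  have hlb : ∀ c ∈ S, T ≤ c := by
    rintro c ⟨r, u, v, hdec, hc⟩
    set W : Fin m × Fin n → ℂ :=
      fun q => ∑ k, evec (φ k) q.1 * evec (χ k) q.2 with hWdef
    have hWsum : W = ∑ k, (fun q : Fin m × Fin n => evec (φ k) q.1 * evec (χ k) q.2) := by
      funext q
      rw [hWdef, Finset.sum_apply]
    -- (a) the value of the quadratic form on the projection
    have hWψ : star W ⬝ᵥ evec ψ = ((∑ i, Real.sqrt (p i) : ℝ) : ℂ) := by
      rw [hψfun, hWsum, star_sum, sum_dotProduct'']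
      have h1 : ∀ k : ι, (star (fun q : Fin m × Fin n => evec (φ k) q.1 * evec (χ k) q.2)) ⬝ᵥ
          (∑ l, ((Real.sqrt (p l) : ℝ) : ℂ) •
            (fun q : Fin m × Fin n => evec (φ l) q.1 * evec (χ l) q.2))
          = ((Real.sqrt (p k) : ℝ) : ℂ) := by
        intro k
        rw [dotProduct_sum'']
        have h2 : ∀ l : ι, (star (fun q : Fin m × Fin n => evec (φ k) q.1 * evec (χ k) q.2)) ⬝ᵥ
            (((Real.sqrt (p l) : ℝ) : ℂ) •
              (fun q : Fin m × Fin n => evec (φ l) q.1 * evec (χ l) q.2))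
            = ((Real.sqrt (p l) : ℝ) : ℂ) * (if k = l then 1 else 0) := by
          intro l
          rw [dotProduct_smul, tensor_dot]
          have hφd : star (evec (φ k)) ⬝ᵥ evec (φ l) = (if k = l then (1:ℂ) else 0) := by
            rw [← orthonormal_sum_eq φ hφ k l]
            rfl
          have hχd : star (evec (χ k)) ⬝ᵥ evec (χ l) = (if k = l then (1:ℂ) else 0) := by
            rw [← orthonormal_sum_eq χ hχ k l]
            rfl
          rw [hφd, hχd, smul_eq_mul]
          by_cases hkl : k = l <;> simp [hkl]
        rw [Finset.sum_congr rfl fun l _ => h2 l]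
        simp
      rw [Finset.sum_congr rfl fun k _ => h1 k]
      push_cast
      rfl
    have hval : star W ⬝ᵥ (projOnto ψ *ᵥ W) = ((∑ i, Real.sqrt (p i) : ℝ) : ℂ) ^ 2 := by
      rw [projOnto, vecMulVec_mulVec'', dotProduct_smul, star_dotProduct_comm (evec ψ) W,
        hWψ, smul_eq_mul, Complex.star_def, Complex.conj_ofReal, sq]
    -- (b) expansion over the decomposition
    have hsplit : star W ⬝ᵥ (projOnto ψ *ᵥ W) = ∑ i, star W ⬝ᵥ ((u i ⊗ₖ v i) *ᵥ W) := by
      rw [hdec, sum_mulVec'', dotProduct_sum'']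
    have hterm : ∀ i, star W ⬝ᵥ ((u i ⊗ₖ v i) *ᵥ W)
        = ∑ kl : ι × ι, (star (evec (φ kl.1)) ⬝ᵥ (u i *ᵥ evec (φ kl.2)))
            * (star (evec (χ kl.1)) ⬝ᵥ (v i *ᵥ evec (χ kl.2))) := by
      intro i
      rw [hWsum, star_sum, sum_dotProduct'', mulVec_sum'']
      rw [Fintype.sum_prod_type]
      refine Finset.sum_congr rfl fun k _ => ?_
      rw [dotProduct_sum'']
      exact Finset.sum_congr rfl fun l _ => kron_dot (u i) (v i) _ _ _ _
    -- (c) per-term bound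
    have hbound : ∀ i, ‖star W ⬝ᵥ ((u i ⊗ₖ v i) *ᵥ W)‖ ≤ traceNorm (u i) * traceNorm (v i) := by
      intro i
      rw [hterm i]
      have h1 : Real.sqrt (∑ kl : ι × ι, ‖star (evec (φ kl.1)) ⬝ᵥ (u i *ᵥ evec (φ kl.2))‖ ^ 2)
          ≤ traceNorm (u i) := by
        have hA : ∑ kl : ι × ι, ‖star (evec (φ kl.1)) ⬝ᵥ (u i *ᵥ evec (φ kl.2))‖ ^ 2
            ≤ traceNorm (u i) ^ 2 := by
          rw [Fintype.sum_prod_type]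
          exact (compression_le φ hφ (u i)).trans (frobenius_sq_le_traceNorm_sq (u i))
        calc Real.sqrt (∑ kl : ι × ι, ‖star (evec (φ kl.1)) ⬝ᵥ (u i *ᵥ evec (φ kl.2))‖ ^ 2)
            ≤ Real.sqrt (traceNorm (u i) ^ 2) := Real.sqrt_le_sqrt hA
          _ = traceNorm (u i) := Real.sqrt_sq (traceNorm_nonneg' _)
      have h2 : Real.sqrt (∑ kl : ι × ι, ‖star (evec (χ kl.1)) ⬝ᵥ (v i *ᵥ evec (χ kl.2))‖ ^ 2)
          ≤ traceNorm (v i) := by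
        have hB : ∑ kl : ι × ι, ‖star (evec (χ kl.1)) ⬝ᵥ (v i *ᵥ evec (χ kl.2))‖ ^ 2
            ≤ traceNorm (v i) ^ 2 := by
          rw [Fintype.sum_prod_type]
          exact (compression_le χ hχ (v i)).trans (frobenius_sq_le_traceNorm_sq (v i))
        calc Real.sqrt (∑ kl : ι × ι, ‖star (evec (χ kl.1)) ⬝ᵥ (v i *ᵥ evec (χ kl.2))‖ ^ 2)
            ≤ Real.sqrt (traceNorm (v i) ^ 2) := Real.sqrt_le_sqrt hB
          _ = traceNorm (v i) := Real.sqrt_sq (traceNorm_nonneg' _)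
      refine (norm_sum_mul_le _ _).trans ?_
      exact mul_le_mul h1 h2 (Real.sqrt_nonneg _) (traceNorm_nonneg' _)
    -- (d) conclusion
    have hTle : T ≤ ∑ i, traceNorm (u i) * traceNorm (v i) := by
      calc T = ‖star W ⬝ᵥ (projOnto ψ *ᵥ W)‖ := by
            rw [hval, norm_pow, Complex.norm_real, Real.norm_eq_abs, abs_of_nonneg hT0, hT]
        _ = ‖∑ i, star W ⬝ᵥ ((u i ⊗ₖ v i) *ᵥ W)‖ := by rw [← hsplit]
        _ ≤ ∑ i, ‖star W ⬝ᵥ ((u i ⊗ₖ v i) *ᵥ W)‖ := norm_sum_le _ _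
        _ ≤ ∑ i, traceNorm (u i) * traceNorm (v i) := Finset.sum_le_sum fun i _ => hbound i
    rw [hc]
    exact hTle
  have key : gammaNorm (projOnto ψ) = T := by
    rw [hg]
    exact le_antisymm (csInf_le ⟨T, fun c hc => hlb c hc⟩ hmem) (le_csInf ⟨T, hmem⟩ hlb)
  exact ⟨by rw [key, ← hTsum], key⟩
end

section
/- Let H₁ and H₂ be finite-dimensional complex Hilbert spaces, let U₁ and U₂ be unitary operators on H₁ and H₂ respectively, and let σ be an operator on H₁ ⊗ H₂. Then ‖(U₁ ⊗ U₂) σ (U₁† ⊗ U₂†)‖_γ = ‖σ‖_γ. -/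
open Matrix
open scoped Kronecker ComplexOrder

open scoped MatrixOrder in
lemma traceNorm_eq_sqrt {n : Type*} [Fintype n] [DecidableEq n] (A : Matrix n n ℂ) :
    traceNorm A = (CFC.sqrt (Aᴴ * A)).trace.re := by
  have hX := Matrix.posSemidef_conjTranspose_mul_self A
  rw [CFC.sqrt_eq_real_sqrt (Aᴴ * A) hX.nonneg, cfcₙ_eq_cfc, hX.1.cfc_eq]
  rfl

open scoped MatrixOrder in
lemma traceNorm_conj {n : Type*} [Fintype n] [DecidableEq n]
    (U A : Matrix n n ℂ) (hU : U ∈ Matrix.unitaryGroup n ℂ) :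
    traceNorm (U * A * Uᴴ) = traceNorm A := by
  have hUU : Uᴴ * U = 1 := by
    simpa [Matrix.star_eq_conjTranspose] using (Matrix.mem_unitaryGroup_iff').mp hU
  have key : (U * A * Uᴴ)ᴴ * (U * A * Uᴴ) = U * (Aᴴ * A) * Uᴴ := by
    simp only [conjTranspose_mul, conjTranspose_conjTranspose, Matrix.mul_assoc]
    rw [← Matrix.mul_assoc Uᴴ U (A * Uᴴ), hUU, one_mul]
  rw [traceNorm_eq_sqrt, traceNorm_eq_sqrt, key]
  have hX := Matrix.posSemidef_conjTranspose_mul_self A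
  have hS : CFC.sqrt (U * (Aᴴ * A) * Uᴴ) = U * CFC.sqrt (Aᴴ * A) * Uᴴ := by
    refine CFC.sqrt_unique ?_ ?_
    · rw [show U * CFC.sqrt (Aᴴ * A) * Uᴴ * (U * CFC.sqrt (Aᴴ * A) * Uᴴ)
          = U * CFC.sqrt (Aᴴ * A) * (Uᴴ * U) * CFC.sqrt (Aᴴ * A) * Uᴴ by
        simp [Matrix.mul_assoc], hUU, Matrix.mul_one, Matrix.mul_assoc U,
        CFC.sqrt_mul_sqrt_self _ hX.nonneg]
    · exact ((CFC.sqrt_nonneg (Aᴴ * A)).posSemidef.mul_mul_conjTranspose_same U).nonneg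
  rw [hS, Matrix.trace_mul_cycle, hUU, Matrix.one_mul]

lemma gammaSet_subset {m n : Type*} [Fintype m] [DecidableEq m] [Fintype n] [DecidableEq n]
    (U₁ : Matrix m m ℂ) (U₂ : Matrix n n ℂ)
    (hU₁ : U₁ ∈ Matrix.unitaryGroup m ℂ) (hU₂ : U₂ ∈ Matrix.unitaryGroup n ℂ)
    (σ : Matrix (m × n) (m × n) ℂ) :
    { c : ℝ | ∃ (r : ℕ) (u : Fin r → Matrix m m ℂ) (v : Fin r → Matrix n n ℂ),
        σ = ∑ i, (u i) ⊗ₖ (v i) ∧ c = ∑ i, traceNorm (u i) * traceNorm (v i) } ⊆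
    { c : ℝ | ∃ (r : ℕ) (u : Fin r → Matrix m m ℂ) (v : Fin r → Matrix n n ℂ),
        (U₁ ⊗ₖ U₂) * σ * (U₁ᴴ ⊗ₖ U₂ᴴ) = ∑ i, (u i) ⊗ₖ (v i) ∧
        c = ∑ i, traceNorm (u i) * traceNorm (v i) } := by
  rintro c ⟨r, u, v, hrep, hc⟩
  refine ⟨r, fun i => U₁ * u i * U₁ᴴ, fun i => U₂ * v i * U₂ᴴ, ?_, ?_⟩
  · rw [hrep, Finset.mul_sum, Finset.sum_mul]
    refine Finset.sum_congr rfl fun i _ => ?_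
    rw [← Matrix.mul_kronecker_mul, ← Matrix.mul_kronecker_mul]
  · rw [hc]
    exact Finset.sum_congr rfl fun i _ => by
      rw [traceNorm_conj U₁ (u i) hU₁, traceNorm_conj U₂ (v i) hU₂]

/-- Local unitary conjugation leaves the greatest cross norm invariant. -/
theorem gammaNorm_local_unitary_invariant {m n : Type*}
    [Fintype m] [DecidableEq m] [Fintype n] [DecidableEq n]
    (U₁ : Matrix m m ℂ) (U₂ : Matrix n n ℂ)
    (hU₁ : U₁ ∈ Matrix.unitaryGroup m ℂ) (hU₂ : U₂ ∈ Matrix.unitaryGroup n ℂ)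
    (σ : Matrix (m × n) (m × n) ℂ) :
    gammaNorm ((U₁ ⊗ₖ U₂) * σ * (U₁ᴴ ⊗ₖ U₂ᴴ)) = gammaNorm σ := by
  have hU₁' : U₁ᴴ ∈ Matrix.unitaryGroup m ℂ := by
    simpa [Matrix.star_eq_conjTranspose] using (Unitary.star_mem hU₁)
  have hU₂' : U₂ᴴ ∈ Matrix.unitaryGroup n ℂ := by
    simpa [Matrix.star_eq_conjTranspose] using (Unitary.star_mem hU₂)
  have h11 : U₁ᴴ * U₁ = 1 := by
    simpa [Matrix.star_eq_conjTranspose] using (Matrix.mem_unitaryGroup_iff').mp hU₁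
  have h22 : U₂ᴴ * U₂ = 1 := by
    simpa [Matrix.star_eq_conjTranspose] using (Matrix.mem_unitaryGroup_iff').mp hU₂
  have hback : (U₁ᴴ ⊗ₖ U₂ᴴ) * ((U₁ ⊗ₖ U₂) * σ * (U₁ᴴ ⊗ₖ U₂ᴴ)) * (U₁ᴴᴴ ⊗ₖ U₂ᴴᴴ) = σ := by
    simp only [Matrix.conjTranspose_conjTranspose]
    rw [← Matrix.mul_assoc, ← Matrix.mul_assoc, ← Matrix.mul_kronecker_mul, h11, h22,
      Matrix.one_kronecker_one, Matrix.one_mul, Matrix.mul_assoc,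
      ← Matrix.mul_kronecker_mul, h11, h22, Matrix.one_kronecker_one, Matrix.mul_one]
  unfold gammaNorm
  have h2 := gammaSet_subset U₁ᴴ U₂ᴴ hU₁' hU₂' ((U₁ ⊗ₖ U₂) * σ * (U₁ᴴ ⊗ₖ U₂ᴴ))
  rw [hback] at h2
  exact congrArg sInf (Set.Subset.antisymm h2 (gammaSet_subset U₁ U₂ hU₁ hU₂ σ))
end

section
/- Let H be a finite-dimensional complex Hilbert space and let {Pᵢ} be a finite family of mutually orthogonal projection operators on H (PᵢPⱼ = 0 for i ≠ j). Then for every operator x on H, Σᵢ ‖Pᵢ x Pᵢ‖₁ ≤ ‖x‖₁. -/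
open Matrix
open scoped Kronecker ComplexOrder

open Matrix
open scoped ComplexOrder

namespace TNaux

set_option linter.unusedSectionVars false

variable {n : Type*} [Fintype n] [DecidableEq n]

/-- `C` is a contraction. -/
def Con (C : Matrix n n ℂ) : Prop := (1 - Cᴴ * C).PosSemidef

lemma con_one : Con (1 : Matrix n n ℂ) := by
  simpa [Con] using Matrix.PosSemidef.zero

lemma con_mul {A B : Matrix n n ℂ} (hA : Con A) (hB : Con B) : Con (A * B) := by
  have key : 1 - (A * B)ᴴ * (A * B) = Bᴴ * (1 - Aᴴ * A) * B + (1 - Bᴴ * B) := by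
    simp only [conjTranspose_mul]
    noncomm_ring
  rw [Con, key]
  exact (hA.conjTranspose_mul_mul_same B).add hB

/-- Euclidean norm of a plain vector. -/
noncomputable def enorm (v : n → ℂ) : ℝ := ‖(WithLp.equiv 2 (n → ℂ)).symm v‖

lemma enorm_nonneg (v : n → ℂ) : 0 ≤ enorm v := norm_nonneg _

lemma dot_star_self (v : n → ℂ) :
    dotProduct (star v) v = ((∑ i, Complex.normSq (v i) : ℝ) : ℂ) := by
  unfold dotProduct
  push_cast
  refine Finset.sum_congr rfl fun i _ => ?_
  simp [Pi.star_apply, Complex.normSq_eq_conj_mul_self]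

lemma enorm_sq (v : n → ℂ) : enorm v ^ 2 = (dotProduct (star v) v).re := by
  have h2 := inner_self_eq_norm_sq (𝕜 := ℂ) ((WithLp.equiv 2 (n → ℂ)).symm v)
  rw [enorm, ← h2, dotProduct_comm]
  rfl

lemma dot_star_self_nonneg (v : n → ℂ) : (0:ℂ) ≤ dotProduct (star v) v := by
  rw [dot_star_self]
  exact Complex.zero_le_real.2 (Finset.sum_nonneg fun i _ => Complex.normSq_nonneg _)

lemma dot_star_self_im (v : n → ℂ) : (dotProduct (star v) v).im = 0 := by
  rw [dot_star_self]; simp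


-- continuation, for testing appended to a.lean



lemma dot_mulVec_self (C : Matrix n n ℂ) (v : n → ℂ) :
    dotProduct (star v) ((Cᴴ * C) *ᵥ v)
      = dotProduct (star (C *ᵥ v)) (C *ᵥ v) := by
  rw [star_mulVec, ← Matrix.mulVec_mulVec, Matrix.dotProduct_mulVec]

lemma con_enorm {C : Matrix n n ℂ} (hC : Con C) (v : n → ℂ) :
    enorm (C *ᵥ v) ≤ enorm v := by
  have h := hC.dotProduct_mulVec_nonneg v
  rw [Matrix.sub_mulVec, Matrix.one_mulVec, dotProduct_sub, sub_nonneg,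
    dot_mulVec_self] at h
  have hre : (dotProduct (star (C *ᵥ v)) (C *ᵥ v)).re
      ≤ (dotProduct (star v) v).re := (Complex.le_def.mp h).1
  rw [← enorm_sq, ← enorm_sq] at hre
  have := Real.sqrt_le_sqrt hre
  rwa [Real.sqrt_sq (enorm_nonneg _), Real.sqrt_sq (enorm_nonneg _)] at this

lemma con_of_enorm {C : Matrix n n ℂ} (h : ∀ v, enorm (C *ᵥ v) ≤ enorm v) : Con C := by
  refine Matrix.PosSemidef.of_dotProduct_mulVec_nonneg ?_ ?_
  · simp only [Matrix.IsHermitian, conjTranspose_sub, conjTranspose_mul,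
      conjTranspose_conjTranspose, conjTranspose_one]
  · intro v
    rw [Matrix.sub_mulVec, Matrix.one_mulVec, dotProduct_sub, sub_nonneg,
      dot_mulVec_self]
    rw [Complex.le_def]
    constructor
    · rw [← enorm_sq, ← enorm_sq]
      exact pow_le_pow_left₀ (enorm_nonneg _) (h v) 2
    · rw [dot_star_self_im, dot_star_self_im]

lemma con_conjTranspose {C : Matrix n n ℂ} (hC : Con C) : Con Cᴴ := by
  refine con_of_enorm fun v => ?_
  set u := Cᴴ *ᵥ v with hu
  have key : dotProduct (star u) u = dotProduct (star v) (C *ᵥ u) := by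
    simp [hu, star_mulVec, Matrix.dotProduct_mulVec, Matrix.vecMul_vecMul]
  -- inner ⟪v, C u⟫ in Euclidean space
  set v' := (WithLp.equiv 2 (n → ℂ)).symm v
  set w' := (WithLp.equiv 2 (n → ℂ)).symm (C *ᵥ u)
  have hinner : (inner ℂ v' w' : ℂ) = dotProduct (star v) (C *ᵥ u) := by
    rw [dotProduct_comm]; rfl
  have h1 : enorm u ^ 2 ≤ enorm v * enorm (C *ᵥ u) := by
    have : enorm u ^ 2 = (inner ℂ v' w' : ℂ).re := by
      rw [hinner, ← key, enorm_sq]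
    rw [this]
    calc (inner ℂ v' w' : ℂ).re ≤ ‖inner ℂ v' w'‖ := Complex.re_le_norm _
      _ ≤ ‖v'‖ * ‖w'‖ := by
          exact norm_inner_le_norm (𝕜 := ℂ) v' w'
      _ = enorm v * enorm (C *ᵥ u) := rfl
  have h2 : enorm (C *ᵥ u) ≤ enorm u := hC.dotProduct_mulVec_nonneg u |> fun _ => con_enorm hC u
  nlinarith [enorm_nonneg u, enorm_nonneg v, enorm_nonneg (C *ᵥ u)]

lemma con_diag_le {K : Matrix n n ℂ} (hK : Con K) (i : n) : ‖K i i‖ ≤ 1 := by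
  have h := con_enorm hK (Pi.single i 1)
  have hs : enorm (Pi.single i (1:ℂ)) = 1 := by
    have : enorm (Pi.single i (1:ℂ)) ^ 2 = 1 := by
      rw [enorm_sq, dot_star_self]
      rw [Finset.sum_eq_single i]
      · simp
      · intro j _ hj; simp [Pi.single_eq_of_ne hj]
      · simp
    nlinarith [enorm_nonneg (Pi.single i (1:ℂ))]
  have hKi : K *ᵥ Pi.single i 1 = fun j => K j i := by
    funext j; simp [Matrix.mulVec_single]
  have hcomp : ‖K i i‖ ≤ enorm (K *ᵥ Pi.single i 1) := by
    have h2 : ‖K i i‖ ^ 2 ≤ enorm (K *ᵥ Pi.single i 1) ^ 2 := by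
      rw [enorm_sq, dot_star_self, hKi]
      simp only [Complex.ofReal_re]
      calc ‖K i i‖ ^ 2 = Complex.normSq (K i i) := by
            rw [Complex.sq_norm]
        _ ≤ ∑ j, Complex.normSq (K j i) :=
            Finset.single_le_sum (f := fun j => Complex.normSq (K j i))
              (fun j _ => Complex.normSq_nonneg _) (Finset.mem_univ i)
    nlinarith [enorm_nonneg (K *ᵥ Pi.single i 1), norm_nonneg (K i i)]
  calc ‖K i i‖ ≤ enorm (K *ᵥ Pi.single i 1) := hcomp
    _ ≤ 1 := hs ▸ h


lemma sandwich {V : Matrix n n ℂ} (hV : Vᴴ * V = 1) (d₁ d₂ : n → ℂ) :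
    (V * diagonal d₁ * Vᴴ) * (V * diagonal d₂ * Vᴴ) = V * diagonal (d₁ * d₂) * Vᴴ := by
  simp only [Matrix.mul_assoc]
  rw [← Matrix.mul_assoc Vᴴ V (diagonal d₂ * Vᴴ), hV, Matrix.one_mul,
    ← Matrix.mul_assoc (diagonal d₁) (diagonal d₂) Vᴴ, diagonal_mul_diagonal]
  rfl

lemma psd_spectral {S : Matrix n n ℂ} (hS : S.PosSemidef) :
    ∃ (V : Matrix n n ℂ) (lam : n → ℝ), Vᴴ * V = 1 ∧ V * Vᴴ = 1 ∧ (∀ i, 0 ≤ lam i) ∧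
      S = V * Matrix.diagonal (fun i => (lam i : ℂ)) * Vᴴ := by
  refine ⟨(Matrix.IsHermitian.eigenvectorUnitary hS.1 : Matrix n n ℂ), hS.1.eigenvalues, ?_, ?_,
    hS.eigenvalues_nonneg, ?_⟩
  · rw [← Matrix.star_eq_conjTranspose]
    exact Unitary.coe_star_mul_self _
  · rw [← Matrix.star_eq_conjTranspose]
    exact Unitary.coe_mul_star_self _
  · have := hS.1.spectral_theorem
    rw [Unitary.conjStarAlgAut_apply] at this
    rw [← Matrix.star_eq_conjTranspose]
    exact this.trans rfl

noncomputable def psqrt {A : Matrix n n ℂ} (hA : A.PosSemidef) : Matrix n n ℂ :=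
  hA.1.eigenvectorUnitary.1 * diagonal (((↑) : ℝ → ℂ) ∘ (√·) ∘ hA.1.eigenvalues) *
    (star hA.1.eigenvectorUnitary : Matrix n n ℂ)

lemma psqrt_posSemidef {A : Matrix n n ℂ} (hA : A.PosSemidef) : (psqrt hA).PosSemidef := by
  unfold psqrt
  have h := (posSemidef_diagonal_iff (d := ((↑) : ℝ → ℂ) ∘ (√·) ∘ hA.1.eigenvalues)).2 fun i => by
    simp only [Function.comp_apply]; exact Complex.zero_le_real.2 (Real.sqrt_nonneg _)
  rw [Matrix.star_eq_conjTranspose]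
  exact h.mul_mul_conjTranspose_same _

lemma psqrt_mul_self {A : Matrix n n ℂ} (hA : A.PosSemidef) : psqrt hA * psqrt hA = A := by
  have hU : (hA.1.eigenvectorUnitary : Matrix n n ℂ)ᴴ * hA.1.eigenvectorUnitary = 1 := by
    rw [← Matrix.star_eq_conjTranspose]; exact Unitary.coe_star_mul_self _
  unfold psqrt
  rw [Matrix.star_eq_conjTranspose, sandwich hU]
  have hd : (((↑) : ℝ → ℂ) ∘ (√·) ∘ hA.1.eigenvalues) * (((↑) : ℝ → ℂ) ∘ (√·) ∘ hA.1.eigenvalues)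
      = fun i => (hA.1.eigenvalues i : ℂ) := by
    funext i
    simp only [Pi.mul_apply, Function.comp_apply, ← Complex.ofReal_mul,
      Real.mul_self_sqrt (hA.eigenvalues_nonneg i)]
  rw [hd]
  have := hA.1.spectral_theorem
  rw [Unitary.conjStarAlgAut_apply] at this
  refine Eq.trans ?_ this.symm
  rfl

lemma star_ite (lam : n → ℝ) (a b : ℂ) (ha : star a = a) (hb : star b = b) :
    star (fun i => if lam i = 0 then a else b) = fun i => if lam i = 0 then a else b := by
  funext i
  by_cases h : lam i = 0 <;> simp [h, ha, hb]

lemma polar (A : Matrix n n ℂ) :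
    ∃ W : Matrix n n ℂ, Con W ∧ A = W * psqrt (posSemidef_conjTranspose_mul_self A) ∧
      Wᴴ * A = psqrt (posSemidef_conjTranspose_mul_self A) := by
  set hA := posSemidef_conjTranspose_mul_self A with hhA
  set S := psqrt hA with hSdef
  have hS : S.PosSemidef := psqrt_posSemidef hA
  have hSS : S * S = Aᴴ * A := psqrt_mul_self hA
  obtain ⟨V, lam, hV1, hV2, hlam, hspec⟩ := psd_spectral hS
  set d : n → ℂ := fun i => (lam i : ℂ) with hd
  set p : n → ℂ := fun i => if lam i = 0 then 0 else (lam i : ℂ)⁻¹ with hp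
  set e : n → ℂ := fun i => if lam i = 0 then 0 else 1 with he
  have hstarp : star p = p := by
    funext i
    by_cases h : lam i = 0 <;>
      simp [hp, h, ← Complex.ofReal_inv, Complex.conj_ofReal]
  have hstare1 : star (fun i => 1 - e i) = fun i => 1 - e i := by
    funext i; by_cases h : lam i = 0 <;> simp [he, h]
  have hed : e * d = d := by
    funext i
    by_cases h : lam i = 0 <;> simp [he, hd, Pi.mul_apply, h]
  have hpdd : p * (d * d) * p = e := by
    funext i
    by_cases h : lam i = 0
    · simp [he, hp, hd, Pi.mul_apply, h]
    · have hne : (lam i : ℂ) ≠ 0 := Complex.ofReal_ne_zero.2 h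
      simp only [Pi.mul_apply, hp, hd, he, if_neg h]
      field_simp
  have hfd : (fun i => 1 - e i) * (d * d) * (fun i => 1 - e i) = 0 := by
    funext i
    by_cases h : lam i = 0 <;> simp [he, hd, Pi.mul_apply, h]
  have hpd : p * d = e := by
    funext i
    by_cases h : lam i = 0
    · simp [he, hp, hd, Pi.mul_apply, h]
    · have hne : (lam i : ℂ) ≠ 0 := Complex.ofReal_ne_zero.2 h
      simp [he, hp, hd, Pi.mul_apply, h, inv_mul_cancel₀ hne]
  set Pm : Matrix n n ℂ := V * diagonal p * Vᴴ with hPm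
  set W : Matrix n n ℂ := A * Pm with hW
  have hPmH : Pmᴴ = Pm := by
    simp only [hPm, conjTranspose_mul, conjTranspose_conjTranspose, diagonal_conjTranspose,
      hstarp, Matrix.mul_assoc]
  -- WᴴW = V e Vᴴ
  have hWW : Wᴴ * W = V * diagonal e * Vᴴ := by
    have : Wᴴ * W = Pm * (S * S) * Pm := by
      rw [hW, conjTranspose_mul, hPmH, hSS]
      noncomm_ring
    rw [this, hspec, hPm]
    rw [Matrix.mul_assoc (V * diagonal p * Vᴴ), ← Matrix.mul_assoc (V * diagonal p * Vᴴ),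
      sandwich hV1, sandwich hV1, sandwich hV1, hpdd]
  have hConW : Con W := by
    rw [Con, hWW]
    have h1 : (1 : Matrix n n ℂ) - V * diagonal e * Vᴴ
        = V * diagonal (fun i => 1 - e i) * Vᴴ := by
      have : diagonal (fun i => 1 - (e i : ℂ)) = 1 - diagonal e := by
        rw [← diagonal_one, diagonal_sub]
      rw [this, Matrix.mul_sub, Matrix.sub_mul, Matrix.mul_one, hV2]
    rw [h1]
    have hdiag : (diagonal (fun i => 1 - (e i:ℂ))).PosSemidef := by
      rw [posSemidef_diagonal_iff]
      intro i
      by_cases h : lam i = 0 <;> simp [he, h]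
    simpa using hdiag.mul_mul_conjTranspose_same V
  -- A (V (1-e) Vᴴ) = 0
  set Q : Matrix n n ℂ := V * diagonal (fun i => 1 - e i) * Vᴴ with hQ
  have hQH : Qᴴ = Q := by
    simp only [hQ, conjTranspose_mul, conjTranspose_conjTranspose, diagonal_conjTranspose,
      hstare1, Matrix.mul_assoc]
  have hAQ : A * Q = 0 := by
    rw [← Matrix.conjTranspose_mul_self_eq_zero]
    have : (A * Q)ᴴ * (A * Q) = Q * (S * S) * Q := by
      rw [conjTranspose_mul, hQH, hSS]
      noncomm_ring
    rw [this, hspec, hQ, Matrix.mul_assoc (V * diagonal (fun i => 1 - e i) * Vᴴ),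
      ← Matrix.mul_assoc (V * diagonal (fun i => 1 - e i) * Vᴴ),
      sandwich hV1, sandwich hV1, sandwich hV1, hfd]
    show V * diagonal 0 * Vᴴ = 0
    ext i j
    simp [Matrix.mul_apply, Matrix.diagonal_apply]
  have hVeV : V * diagonal e * Vᴴ = 1 - Q := by
    have h1' : diagonal (fun i => 1 - (e i : ℂ)) = 1 - diagonal e := by
      rw [← diagonal_one, diagonal_sub]
    have h2 : diagonal e = 1 - diagonal (fun i => 1 - (e i : ℂ)) := by
      rw [h1', sub_sub_cancel]
    rw [h2, Matrix.mul_sub, Matrix.sub_mul, Matrix.mul_one, hV2, hQ]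
  have hAe : A * (V * diagonal e * Vᴴ) = A := by
    rw [hVeV, Matrix.mul_sub, hAQ, Matrix.mul_one, sub_zero]
  have hpolar : W * S = A := by
    rw [hW, hspec, hPm, Matrix.mul_assoc A, sandwich hV1, hpd, hAe]
  have hWA : Wᴴ * A = S := by
    have h1 : Wᴴ * A = (Wᴴ * W) * S := by
      rw [Matrix.mul_assoc, hpolar]
    rw [h1, hWW, hspec, sandwich hV1, hed, ← hspec]
  exact ⟨W, hConW, hpolar.symm, hWA⟩

lemma trace_mul_diag (K : Matrix n n ℂ) (dd : n → ℂ) :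
    (K * diagonal dd).trace = ∑ i, K i i * dd i := by
  simp [Matrix.trace, Matrix.diag, Matrix.mul_diagonal]

lemma exists_con (A : Matrix n n ℂ) :
    ∃ C : Matrix n n ℂ, Con C ∧ ((C * A).trace).re = traceNorm A := by
  obtain ⟨W, hWcon, _, hWA⟩ := polar A
  exact ⟨Wᴴ, con_conjTranspose hWcon, by rw [hWA]; rfl⟩

lemma trace_le (A : Matrix n n ℂ) {C : Matrix n n ℂ} (hC : Con C) :
    ((C * A).trace).re ≤ traceNorm A := by
  obtain ⟨W, hWcon, hpol, -⟩ := polar A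
  set S := psqrt (posSemidef_conjTranspose_mul_self A) with hSdef
  have hS : S.PosSemidef := psqrt_posSemidef (posSemidef_conjTranspose_mul_self A)
  obtain ⟨V, lam, hV1, hV2, hlam, hspec⟩ := psd_spectral hS
  set dd : n → ℂ := fun i => (lam i : ℂ) with hdd
  have hConV : Con V := by
    rw [Con, hV1, sub_self]; exact Matrix.PosSemidef.zero
  have hConVH : Con Vᴴ := by
    rw [Con, conjTranspose_conjTranspose, hV2, sub_self]; exact Matrix.PosSemidef.zero
  set K := Vᴴ * (C * W * V) with hK
  have hConK : Con K := con_mul hConVH (con_mul (con_mul hC hWcon) hConV)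
  have htr : (C * A).trace = (K * diagonal dd).trace := by
    rw [hpol, hspec]
    rw [show C * (W * (V * diagonal dd * Vᴴ)) = (C * W * V * diagonal dd) * Vᴴ by noncomm_ring,
      Matrix.trace_mul_comm,
      show Vᴴ * (C * W * V * diagonal dd) = (Vᴴ * (C * W * V)) * diagonal dd by noncomm_ring]
  have htrS : S.trace = ∑ i, dd i := by
    rw [hspec, Matrix.trace_mul_comm,
      show Vᴴ * (V * diagonal dd) = (Vᴴ * V) * diagonal dd by noncomm_ring, hV1,
      Matrix.one_mul, Matrix.trace_diagonal]
  have hTN : traceNorm A = ∑ i, lam i := by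
    show (S.trace).re = _
    rw [htrS]
    rw [Complex.re_sum]
    exact Finset.sum_congr rfl fun i _ => by simp [hdd]
  rw [htr, trace_mul_diag, Complex.re_sum, hTN]
  refine Finset.sum_le_sum fun i _ => ?_
  have h1 : (K i i * dd i).re = (K i i).re * lam i := by
    simp [hdd, Complex.mul_re]
  rw [h1]
  calc (K i i).re * lam i ≤ 1 * lam i := by
        refine mul_le_mul_of_nonneg_right ?_ (hlam i)
        exact le_trans (Complex.re_le_norm _) (con_diag_le hConK i)
    _ = lam i := one_mul _

end TNaux

/-- For a finite family of mutually orthogonal projections Pᵢ,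
`∑ i, ‖Pᵢ x Pᵢ‖₁ ≤ ‖x‖₁`. -/
theorem sum_traceNorm_compressions_le {n ι : Type*} [Fintype n] [DecidableEq n] [Fintype ι]
    (P : ι → Matrix n n ℂ)
    (hherm : ∀ i, (P i)ᴴ = P i) (hidem : ∀ i, P i * P i = P i)
    (horth : ∀ i j, i ≠ j → P i * P j = 0)
    (x : Matrix n n ℂ) :
    ∑ i, traceNorm (P i * x * P i) ≤ traceNorm x := by
  classical
  choose C hCcon hCtr using fun i => TNaux.exists_con (P i * x * P i)
  set Cf : Matrix n n ℂ := ∑ i, P i * C i * P i with hCf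
  have hCfH : Cfᴴ = ∑ i, P i * (C i)ᴴ * P i := by
    rw [hCf, Matrix.conjTranspose_sum]
    exact Finset.sum_congr rfl fun i _ => by
      simp [Matrix.conjTranspose_mul, hherm, Matrix.mul_assoc]
  have hmul : Cfᴴ * Cf = ∑ i, P i * ((C i)ᴴ * (P i * C i)) * P i := by
    rw [hCfH, hCf, Finset.sum_mul_sum]
    refine Finset.sum_congr rfl fun i _ => ?_
    rw [Finset.sum_eq_single i]
    · rw [show (P i * (C i)ᴴ * P i) * (P i * C i * P i)
          = (P i * (C i)ᴴ) * ((P i * P i) * (C i * P i)) by noncomm_ring, hidem i]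
      noncomm_ring
    · intro j _ hji
      rw [show (P i * (C i)ᴴ * P i) * (P j * C j * P j)
          = (P i * (C i)ᴴ) * ((P i * P j) * (C j * P j)) by noncomm_ring,
        horth i j (Ne.symm hji)]
      simp
    · intro h; exact absurd (Finset.mem_univ i) h
  have hPpsd : ∀ i, ((1 : Matrix n n ℂ) - P i).PosSemidef := by
    intro i
    have h2 : ((1 : Matrix n n ℂ) - P i) * (1 - P i) = 1 - P i := by
      have expand : ((1 : Matrix n n ℂ) - P i) * (1 - P i)
          = 1 - P i - P i + P i * P i := by noncomm_ring
      rw [expand, hidem i]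
      abel
    have h3 : ((1 : Matrix n n ℂ) - P i) = ((1 : Matrix n n ℂ) - P i)ᴴ * (1 - P i) := by
      rw [Matrix.conjTranspose_sub, Matrix.conjTranspose_one, hherm, h2]
    rw [h3]
    exact Matrix.posSemidef_conjTranspose_mul_self _
  have hCon : TNaux.Con Cf := by
    rw [TNaux.Con, hmul]
    have hterm : ∀ i, (P i)ᴴ * ((1 - (C i)ᴴ * C i) + (C i)ᴴ * (1 - P i) * C i) * P i
        = P i - P i * ((C i)ᴴ * (P i * C i)) * P i := by
      intro i
      rw [hherm]
      have expand : P i * ((1 - (C i)ᴴ * C i) + (C i)ᴴ * (1 - P i) * C i) * P i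
          = P i * P i - P i * ((C i)ᴴ * (P i * C i)) * P i := by noncomm_ring
      rw [expand, hidem i]
    have key : (1 : Matrix n n ℂ) - ∑ i, P i * ((C i)ᴴ * (P i * C i)) * P i
        = (1 - ∑ i, P i)
          + ∑ i, (P i)ᴴ * ((1 - (C i)ᴴ * C i) + (C i)ᴴ * (1 - P i) * C i) * P i := by
      rw [Finset.sum_congr rfl (fun i _ => hterm i), Finset.sum_sub_distrib]
      abel
    rw [key]
    refine Matrix.PosSemidef.add ?_ ?_
    · -- 1 - ∑ P i is a projection, hence psd
      set Q : Matrix n n ℂ := ∑ i, P i with hQ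
      have hQH : Qᴴ = Q := by
        rw [hQ, Matrix.conjTranspose_sum]
        exact Finset.sum_congr rfl fun i _ => hherm i
      have hQQ : Q * Q = Q := by
        rw [hQ, Finset.sum_mul_sum]
        refine Finset.sum_congr rfl fun i _ => ?_
        rw [Finset.sum_eq_single i]
        · exact hidem i
        · intro j _ hji; exact horth i j (Ne.symm hji)
        · intro h; exact absurd (Finset.mem_univ i) h
      have h2 : ((1 : Matrix n n ℂ) - Q) * (1 - Q) = 1 - Q := by
        have expand : ((1 : Matrix n n ℂ) - Q) * (1 - Q) = 1 - Q - Q + Q * Q := by noncomm_ring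
        rw [expand, hQQ]; abel
      have h3 : ((1 : Matrix n n ℂ) - Q) = ((1 : Matrix n n ℂ) - Q)ᴴ * (1 - Q) := by
        rw [Matrix.conjTranspose_sub, Matrix.conjTranspose_one, hQH, h2]
      rw [h3]
      exact Matrix.posSemidef_conjTranspose_mul_self _
    · refine Finset.sum_induction _ _ (fun a b ha hb => ha.add hb) Matrix.PosSemidef.zero ?_
      intro i _
      refine Matrix.PosSemidef.conjTranspose_mul_mul_same ?_ (P i)
      exact Matrix.PosSemidef.add (hCcon i) ((hPpsd i).conjTranspose_mul_mul_same (C i))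
  have htrace : ((Cf * x).trace).re = ∑ i, traceNorm (P i * x * P i) := by
    rw [hCf, Finset.sum_mul, Matrix.trace_sum, Complex.re_sum]
    refine Finset.sum_congr rfl fun i _ => ?_
    rw [show (P i * C i * P i) * x = (P i) * (C i * (P i * x)) by noncomm_ring,
      Matrix.trace_mul_comm,
      show (C i * (P i * x)) * P i = C i * (P i * x * P i) by noncomm_ring]
    exact hCtr i
  calc ∑ i, traceNorm (P i * x * P i) = ((Cf * x).trace).re := htrace.symm
    _ ≤ traceNorm x := TNaux.trace_le x hCon
end
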